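/- Let y_0 ∈ (0,1) and define h_0 = 1 + 2y_0²/(1-y_0²), y_{i+1} = (1 - 2/h_i) y_i, h_{i+1} = h_i + 4 y_{i+1}²/(1-y_{i+1}²). Then there exists δ > 0 such that for all 0 < y_0 < δ the sequence (h_i) is strictly increasing with 1 < h_i < 2 for all i. -/

import Mathlib

set_option maxHeartbeats 1000000 in
/-- for small y_0 the sequence (h_i) is strictly increasing with 1 < h_i < 2. -/
theorem stmt_2 :
    ∃ δ > (0:ℝ), ∀ y h : ℕ → ℝ,
      y 0 ∈ Set.Ioo (0:ℝ) 1 → y 0 < δ →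
      h 0 = 1 + 2 * (y 0)^2 / (1 - (y 0)^2) →
      (∀ i : ℕ, y (i+1) = (1 - 2 / h i) * y i) →
      (∀ i : ℕ, h (i+1) = h i + 4 * (y (i+1))^2 / (1 - (y (i+1))^2)) →
      StrictMono h ∧ ∀ i : ℕ, 1 < h i ∧ h i < 2 := by
  refine ⟨1/10, by norm_num, ?_⟩
  intro y h hy0 hyδ hh0 hyrec hhrec
  obtain ⟨hy0pos, hy0lt1⟩ := hy0
  obtain ⟨a, ha⟩ : ∃ a : ℝ, a = y 0 := ⟨_, rfl⟩
  rw [← ha] at hy0pos hy0lt1 hyδ hh0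
  have ha2 : a^2 < 1/100 := by nlinarith
  have ha2pos : 0 < a^2 := pow_pos hy0pos 2
  have h1a : (0:ℝ) < 1 - a^2 := by nlinarith
  have hh0gt1 : 1 < h 0 := by
    rw [hh0]
    have : 0 < 2*a^2/(1-a^2) := by positivity
    linarith [this]
  have hh0lt : h 0 < 101/99 := by
    rw [hh0]
    have : 2*a^2/(1-a^2) < 2/99 := by
      rw [div_lt_div_iff₀ h1a (by norm_num)]; nlinarith
    have h2 : 2 * a ^ 2 / (1 - a ^ 2) = 2*a^2/(1-a^2) := by ring_nf
    linarith [this]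
  have hh0ge : 1 + 2*a^2 ≤ h 0 := by
    rw [hh0]
    have : 2*a^2 ≤ 2*a^2/(1-a^2) := by
      rw [le_div_iff₀ h1a]; nlinarith
    linarith [this]
  have hh0pos : (0:ℝ) < h 0 := by linarith
  obtain ⟨r, hr⟩ : ∃ r : ℝ, r = 2 / h 0 - 1 := ⟨_, rfl⟩
  have hrpos : 0 < r := by
    have : 1 < 2 / h 0 := by rw [lt_div_iff₀ hh0pos]; linarith
    rw [hr]; linarith
  have hrlt1 : r < 1 := by
    have : 2 / h 0 < 2 := by rw [div_lt_iff₀ hh0pos]; nlinarith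
    rw [hr]; linarith
  have h1pa : (0:ℝ) < 1 + 2*a^2 := by positivity
  have hrle' : r * (1 + 2*a^2) ≤ 1 - 2*a^2 := by
    have hle : 2 / h 0 ≤ 2 / (1 + 2*a^2) := by
      apply div_le_div_of_nonneg_left (by norm_num) h1pa hh0ge
    have h3 : r ≤ 2 / (1 + 2*a^2) - 1 := by rw [hr]; linarith
    have h2 : (2 / (1 + 2*a^2) - 1) * (1 + 2*a^2) = 1 - 2*a^2 := by
      field_simp; ring
    have h4 := mul_le_mul_of_nonneg_right h3 h1pa.le
    linarith [h4, h2]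
  have hr2' : 8*a^2 ≤ (1 - r^2) * (1 + 2*a^2)^2 := by
    nlinarith [hrle', mul_pos hrpos h1pa, sq_nonneg (r*(1+2*a^2))]
  have h1r2 : 0 < 1 - r^2 := by nlinarith
  obtain ⟨B, hB⟩ : ∃ B : ℝ, B = (400/99) / (1 - r^2) := ⟨_, rfl⟩
  have hBpos : 0 < B := by rw [hB]; positivity
  have hBdef : B * (1 - r^2) = 400/99 := by
    rw [hB]; field_simp
  have hBa : B * a^2 ≤ 2601/4950 := by
    have h1 : B * (8*a^2) ≤ B * ((1 - r^2) * (1 + 2*a^2)^2) :=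
      mul_le_mul_of_nonneg_left hr2' hBpos.le
    have h2 : B * ((1 - r^2) * (1 + 2*a^2)^2) = (400/99) * (1 + 2*a^2)^2 := by
      rw [← mul_assoc, hBdef]
    have h3 : (1 + 2*a^2)^2 < 2601/2500 := by nlinarith
    linarith [h1, h2, h3]
  have hkey : (400/99 + B) * r^2 ≤ B := by
    nlinarith [hBdef, h1r2]
  have htop : h 0 + B * a^2 < 2 := by linarith
  -- the invariant
  have key : ∀ n, h 0 ≤ h n ∧ (y n)^2 ≤ a^2 ∧ h n + B * (y n)^2 ≤ h 0 + B * a^2 ∧ y n ≠ 0 := by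
    intro n
    induction n with
    | zero =>
      refine ⟨le_refl _, le_of_eq (by rw [ha]), le_of_eq (by rw [ha]), ?_⟩
      rw [← ha]; exact ne_of_gt hy0pos
    | succ n ih =>
      obtain ⟨ih1, ih2, ih3, ih4⟩ := ih
      have hyn2 : 0 < (y n)^2 := lt_of_le_of_ne (sq_nonneg _) (Ne.symm (pow_ne_zero 2 ih4))
      have hhn2 : h n < 2 := by linarith [mul_pos hBpos hyn2]
      have hhnpos : 0 < h n := by linarith
      have ht0 : 0 < 2 / h n - 1 := by
        have : 1 < 2 / h n := by rw [lt_div_iff₀ hhnpos]; linarith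
        linarith
      have htr : 2 / h n - 1 ≤ r := by
        have : 2 / h n ≤ 2 / h 0 := div_le_div_of_nonneg_left (by norm_num) hh0pos ih1
        rw [hr]; linarith
      have hfac : (1 - 2 / h n)^2 ≤ r^2 := by nlinarith
      have hy1sq : (y (n+1))^2 ≤ r^2 * (y n)^2 := by
        rw [hyrec n, mul_pow]
        exact mul_le_mul_of_nonneg_right hfac (sq_nonneg _)
      have hy1le : (y (n+1))^2 ≤ (y n)^2 := by nlinarith
      have hy1a : (y (n+1))^2 ≤ a^2 := le_trans hy1le ih2
      have hy1ne : y (n+1) ≠ 0 := by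
        rw [hyrec n]
        exact mul_ne_zero (by intro hc; linarith) ih4
      have hu : 0 < (y (n+1))^2 := lt_of_le_of_ne (sq_nonneg _) (Ne.symm (pow_ne_zero 2 hy1ne))
      have h1u : (0:ℝ) < 1 - (y (n+1))^2 := by nlinarith
      have hincr : 0 < 4 * (y (n+1))^2 / (1 - (y (n+1))^2) := div_pos (by linarith) h1u
      have hle1 : h 0 ≤ h (n+1) := by rw [hhrec n]; linarith
      have hquot : 4 * (y (n+1))^2 / (1 - (y (n+1))^2) ≤ (400/99) * (y (n+1))^2 := by
        rw [div_le_iff₀ h1u]; nlinarith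
      have hJ : h (n+1) + B * (y (n+1))^2 ≤ h 0 + B * a^2 := by
        rw [hhrec n]
        have h1 : (400/99 + B) * (y (n+1))^2 ≤ (400/99 + B) * (r^2 * (y n)^2) := by
          apply mul_le_mul_of_nonneg_left hy1sq (by linarith)
        have h2 : (400/99 + B) * (r^2 * (y n)^2) ≤ B * (y n)^2 := by
          have := mul_le_mul_of_nonneg_right hkey (sq_nonneg (y n))
          nlinarith [this]
        nlinarith [h1, h2, hquot]
      exact ⟨hle1, hy1a, hJ, hy1ne⟩
  have hlt : ∀ n, h n < h (n+1) := by
    intro n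
    obtain ⟨ih1, ih2, ih3, ih4⟩ := key n
    obtain ⟨_, hy1a, _, hy1ne⟩ := key (n+1)
    have hu : 0 < (y (n+1))^2 := lt_of_le_of_ne (sq_nonneg _) (Ne.symm (pow_ne_zero 2 hy1ne))
    have h1u : (0:ℝ) < 1 - (y (n+1))^2 := by nlinarith
    have : 0 < 4 * (y (n+1))^2 / (1 - (y (n+1))^2) := div_pos (by linarith) h1u
    rw [hhrec n]; linarith
  refine ⟨strictMono_nat_of_lt_succ hlt, ?_⟩
  intro i
  obtain ⟨k1, k2, k3, k4⟩ := key i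
  have : 0 < (y i)^2 := lt_of_le_of_ne (sq_nonneg _) (Ne.symm (pow_ne_zero 2 k4))
  constructor
  · linarith
  · linarith [mul_pos hBpos this]
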